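/- Let d ≥ 2 be an even integer and Θ a d-small symbol with bipartition λ¹.λ² and charge (σ₁,σ₂). For each j ∈ {1,2} and each residue class i modulo d, there is at most one box of λ^j that is addable or removable and whose charged content (with respect to t = (σ₁, σ₂ + d/2)) is congruent to i modulo d. Consequently, for each i the bipartition λ¹.λ² has at most two addable-or-removable boxes of charged content ≡ i (mod d) in total, at most one in each component. -/
import Mathlib


open scoped Classical

/-- A β-set: a set of integers containing all sufficiently small integers
and no sufficiently large ones. -/
def IsBetaSet (X : Set ℤ) : Prop :=
  (∃ c : ℤ, ∀ z : ℤ, z < c → z ∈ X) ∧ (∃ C : ℤ, ∀ z : ℤ, C ≤ z → z ∉ X)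

/-- `topB X = max X`. -/
noncomputable def topB (X : Set ℤ) : ℤ := sSup X

/-- `botB X = max {z | every integer < z lies in X}`. -/
noncomputable def botB (X : Set ℤ) : ℤ := sSup {z : ℤ | ∀ w : ℤ, w < z → w ∈ X}

/-- The charge `s(X)` of a β-set `X`, computed with the cutoff `c = botB X`. -/
noncomputable def chargeB (X : Set ℤ) : ℤ :=
  ((X ∩ Set.Ici (botB X)).ncard : ℤ) + botB X - 1

/-- `elemSeq X j` is the `(j+1)`-st largest element of the β-set `X`. -/
noncomputable def elemSeq (X : Set ℤ) : ℕ → ℤ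
  | 0 => sSup X
  | n + 1 => sSup (X ∩ Set.Iio (elemSeq X n))

/-- The partition `λ(X)` of a β-set `X`, `0`-indexed: `partB X j = λ_{j+1}`,
recovered from `x_j = s(X) + λ_j - j + 1` where `x_j` is the `j`-th largest element. -/
noncomputable def partB (X : Set ℤ) (j : ℕ) : ℕ :=
  (elemSeq X j - chargeB X + j).toNat

/-- The size `|λ(X)|` of the partition of a β-set `X`. -/
noncomputable def sizeB (X : Set ℤ) : ℕ := ∑ᶠ j : ℕ, partB X j

/-- A partition, encoded as a weakly decreasing eventually zero function (0-indexed). -/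
def IsPartition (μ : ℕ → ℕ) : Prop :=
  (∀ j, μ (j + 1) ≤ μ j) ∧ ∃ N, ∀ j, N ≤ j → μ j = 0

/-- The β-set `{s + λ_j - j + 1 : j ≥ 1}` of the partition `μ` with charge `s`. -/
def betaOf (μ : ℕ → ℕ) (s : ℤ) : Set ℤ :=
  {x : ℤ | ∃ j : ℕ, x = s + (μ j : ℤ) - (j : ℤ)}

/-- The symbol `Θ = (X₁, X₂)` is `d`-small with defining intervals
`I₁ = [a₁,b₁]` and `I₂ = [a₂,b₂]`. -/
structure IsDSmallWith (d : ℤ) (X₁ X₂ : Set ℤ) (a₁ b₁ a₂ b₂ : ℤ) : Prop where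
  len₁ : b₁ - a₁ = d / 2 - 1
  len₂ : b₂ - a₂ = d / 2 - 1
  bot₁ : a₁ ≤ botB X₁
  bot₂ : a₂ ≤ botB X₂
  top₁ : topB X₁ ≤ b₁
  top₂ : topB X₂ ≤ b₂
  cong : d ∣ b₂ - (b₁ + d / 2)

/-- The symbol `Θ = (X₁, X₂)` is `d`-small: it admits some pair of defining intervals. -/
def IsDSmall (d : ℤ) (X₁ X₂ : Set ℤ) : Prop :=
  ∃ a₁ b₁ a₂ b₂ : ℤ, IsDSmallWith d X₁ X₂ a₁ b₁ a₂ b₂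

/-- The row (`1` or `2`) containing the right region. -/
def rightRow (b₁ b₂ : ℤ) : ℕ := if b₁ < b₂ then 2 else 1

/-- The row, as a β-set, containing the right region. -/
def rightSet (X₁ X₂ : Set ℤ) (b₁ b₂ : ℤ) : Set ℤ := if b₁ < b₂ then X₂ else X₁

/-- The row, as a β-set, containing the left region. -/
def leftSet (X₁ X₂ : Set ℤ) (b₁ b₂ : ℤ) : Set ℤ := if b₁ < b₂ then X₁ else X₂

/-- The cardinality `kd` of the middle region. -/
def middleLen (d b₁ b₂ : ℤ) : ℤ := |b₂ - b₁| - d / 2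

/-- The alphabet `{∧, ∨, ×, ∘}` of up-down diagrams: `up = ∧`, `dn = ∨`,
`cross = ×`, `circ = ∘`. -/
inductive UD : Type
  | up
  | dn
  | cross
  | circ
deriving DecidableEq

/-- The up-down diagram `w_ud(Θ)` of a `d`-small symbol with defining intervals:
`wud d X₁ X₂ b₁ b₂ i` is the letter `w_i` for `1 ≤ i ≤ d/2`.  Here the right
region is `[m+1, m+d/2]` with `m = max b₁ b₂ - d/2`, `β_i = m + i`, and
`β_i - kd - d/2 = β_i - |b₂ - b₁|`. -/
noncomputable def wud (d : ℤ) (X₁ X₂ : Set ℤ) (b₁ b₂ : ℤ) (i : ℤ) : UD :=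
  if (max b₁ b₂ - d / 2 + i) ∈ rightSet X₁ X₂ b₁ b₂ then
    if (max b₁ b₂ - d / 2 + i) - |b₂ - b₁| ∈ leftSet X₁ X₂ b₁ b₂ then UD.cross else UD.up
  else
    if (max b₁ b₂ - d / 2 + i) - |b₂ - b₁| ∈ leftSet X₁ X₂ b₁ b₂ then UD.dn else UD.circ

/-- Removing an `e`-cohook in row `1` (the rows get interchanged afterwards). -/
def RemoveCohookRow1 (e : ℤ) (Θ Θ' : Set ℤ × Set ℤ) : Prop :=
  ∃ x : ℤ, x ∈ Θ.1 ∧ x - e ∉ Θ.2 ∧ Θ' = (Θ.2 ∪ {x - e}, Θ.1 \ {x})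

/-- Removing an `e`-cohook in row `2` (the rows get interchanged afterwards). -/
def RemoveCohookRow2 (e : ℤ) (Θ Θ' : Set ℤ × Set ℤ) : Prop :=
  ∃ x : ℤ, x ∈ Θ.2 ∧ x - e ∉ Θ.1 ∧ Θ' = (Θ.2 \ {x}, Θ.1 ∪ {x - e})

/-- Removing an `e`-cohook. -/
def RemoveCohook (e : ℤ) (Θ Θ' : Set ℤ × Set ℤ) : Prop :=
  RemoveCohookRow1 e Θ Θ' ∨ RemoveCohookRow2 e Θ Θ'

/-- The symbol `Θ` has an `e`-cohook. -/
def HasCohook (e : ℤ) (Θ : Set ℤ × Set ℤ) : Prop :=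
  (∃ x : ℤ, x ∈ Θ.1 ∧ x - e ∉ Θ.2) ∨ (∃ x : ℤ, x ∈ Θ.2 ∧ x - e ∉ Θ.1)

/-- `C` is an `e`-cocore of `Θ`: a symbol with no `e`-cohooks obtained from `Θ`
by a finite sequence of `e`-cohook removals. -/
def IsCocoreOf (e : ℤ) (Θ C : Set ℤ × Set ℤ) : Prop :=
  Relation.ReflTransGen (RemoveCohook e) Θ C ∧ ¬ HasCohook e C

/-- The `n`-fold composition of a relation. -/
def RelPow {α : Type*} (R : α → α → Prop) : ℕ → α → α → Prop
  | 0 => Eq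
  | n + 1 => fun a c => ∃ b, R a b ∧ RelPow R n b c

/-- `(a, b)` (row `a`, column `b`, both `1`-indexed) is a box of the partition `μ`
(`μ` is `0`-indexed, so `μ (a-1)` is the `a`-th part `λ_a`). -/
def IsBox (μ : ℕ → ℕ) (a b : ℕ) : Prop := 1 ≤ a ∧ 1 ≤ b ∧ b ≤ μ (a - 1)

/-- `(a, b)` is an addable box of `μ`: adjoining it yields a partition. -/
def IsAddableBox (μ : ℕ → ℕ) (a b : ℕ) : Prop :=
  1 ≤ a ∧ b = μ (a - 1) + 1 ∧ (a = 1 ∨ b ≤ μ (a - 2))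

/-- `(a, b)` is a removable box of `μ`: deleting it yields a partition. -/
def IsRemovableBox (μ : ℕ → ℕ) (a b : ℕ) : Prop :=
  1 ≤ a ∧ b = μ (a - 1) ∧ 1 ≤ b ∧ μ a < b

/-- The charged content `t + b - a` of the box in row `a` and column `b`,
with respect to the charge `t`. -/
def chCont (t : ℤ) (a b : ℕ) : ℤ := t + (b : ℤ) - (a : ℤ)

/-- Selecting the component `j ∈ {1, 2}` of a bipartition. -/
def compPart (μ₁ μ₂ : ℕ → ℕ) (j : ℕ) : ℕ → ℕ := if j = 1 then μ₁ else μ₂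

/-- Selecting the component `j ∈ {1, 2}` of a pair of charges. -/
def compT (t₁ t₂ : ℤ) (j : ℕ) : ℤ := if j = 1 then t₁ else t₂

/-- The box `(a, b)` in component `j` is a good removable `i`-box of the
bipartition `(μ₁, μ₂)` with charges `(t₁, t₂)`, where `r` is the row containing
the right region: it is a removable box of charged content `≡ i (mod d)` and
there is no addable box `A` of either component with charged content `≡ i (mod d)`
such that either `A` has strictly larger charged content, or `A` has equal
charged content and lies in component `r`. -/
def IsGoodRemovableBox (d : ℤ) (μ₁ μ₂ : ℕ → ℕ) (t₁ t₂ : ℤ) (r : ℕ) (i : ℤ)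
    (j a b : ℕ) : Prop :=
  (j = 1 ∨ j = 2) ∧ IsRemovableBox (compPart μ₁ μ₂ j) a b ∧
    d ∣ chCont (compT t₁ t₂ j) a b - i ∧
    ∀ j' a' b' : ℕ, (j' = 1 ∨ j' = 2) → IsAddableBox (compPart μ₁ μ₂ j') a' b' →
      d ∣ chCont (compT t₁ t₂ j') a' b' - i →
      ¬ (chCont (compT t₁ t₂ j) a b < chCont (compT t₁ t₂ j') a' b' ∨
        (chCont (compT t₁ t₂ j') a' b' = chCont (compT t₁ t₂ j) a b ∧ j' = r))

/-- The position of a letter in the order `× < ∧ < ∨ < ∘`. -/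
def udIdx : UD → ℕ
  | UD.cross => 0
  | UD.up => 1
  | UD.dn => 2
  | UD.circ => 3

/-- The word `w₁ ⋯ w_{d/2}` reads `×^α ∧^w ∨^h ∘^β`: all `×`'s first, then all
`∧`'s, then all `∨`'s, then all `∘`'s. -/
def SortedUD (d : ℤ) (w : ℤ → UD) : Prop :=
  ∀ i j : ℤ, 1 ≤ i → i ≤ j → j ≤ d / 2 → udIdx (w i) ≤ udIdx (w j)

/-- The number of occurrences of the letter `u` in the word `w₁ ⋯ w_{d/2}`. -/
noncomputable def countUD (d : ℤ) (w : ℤ → UD) (u : UD) : ℕ :=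
  ((Finset.Icc (1 : ℤ) (d / 2)).filter fun i => w i = u).card

/-- `w'` is obtained from `w` by permuting the letters `∧` and `∨` among the
positions carrying `∧` or `∨`, leaving every `×` and `∘` in place. -/
def PermUpDn (d : ℤ) (w w' : ℤ → UD) : Prop :=
  (∀ i : ℤ, 1 ≤ i → i ≤ d / 2 →
    ((w' i = UD.cross ↔ w i = UD.cross) ∧ (w' i = UD.circ ↔ w i = UD.circ))) ∧
  countUD d w' UD.up = countUD d w UD.up

/-- Replace every letter `∧` by `∨`, leaving the other letters unchanged. -/
def replaceUp : UD → UD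
  | UD.up => UD.dn
  | u => u

section StmtEightAux

variable {X : Set ℤ}

lemma IsBetaSet.bddAboveB (hX : IsBetaSet X) : BddAbove X := by
  obtain ⟨C, hC⟩ := hX.2
  exact ⟨C, fun y hy => by by_contra h; exact hC y (by omega) hy⟩

lemma IsBetaSet.lt_botB_mem (hX : IsBetaSet X) {w : ℤ} (hw : w < botB X) : w ∈ X := by
  obtain ⟨c, hc⟩ := hX.1
  obtain ⟨C, hC⟩ := hX.2
  have hne : ({z : ℤ | ∀ w : ℤ, w < z → w ∈ X}).Nonempty := ⟨c, fun w h => hc w h⟩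
  have hbdd : BddAbove {z : ℤ | ∀ w : ℤ, w < z → w ∈ X} := by
    refine ⟨C, fun z hz => ?_⟩
    by_contra h
    exact hC C le_rfl (hz C (by omega))
  have : botB X ∈ {z : ℤ | ∀ w : ℤ, w < z → w ∈ X} := Int.csSup_mem hne hbdd
  exact this w hw

lemma IsBetaSet.botB_le (hX : IsBetaSet X) {y : ℤ} (hy : y ∉ X) : botB X ≤ y := by
  by_contra h
  exact hy (hX.lt_botB_mem (by omega))

lemma IsBetaSet.nonemptyB (hX : IsBetaSet X) : X.Nonempty :=
  ⟨botB X - 1, hX.lt_botB_mem (by omega)⟩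

lemma IsBetaSet.inter_Iio_nonempty (hX : IsBetaSet X) (e : ℤ) :
    (X ∩ Set.Iio e).Nonempty := by
  refine ⟨min e (botB X) - 1, hX.lt_botB_mem ?_, ?_⟩
  · have := min_le_right e (botB X); omega
  · have := min_le_left e (botB X); simp only [Set.mem_Iio]; omega

lemma elemSeq_succ_mem (hX : IsBetaSet X) (n : ℕ) :
    elemSeq X (n + 1) ∈ X ∩ Set.Iio (elemSeq X n) := by
  have : elemSeq X (n + 1) = sSup (X ∩ Set.Iio (elemSeq X n)) := rfl
  rw [this]
  exact Int.csSup_mem (hX.inter_Iio_nonempty _)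
    (hX.bddAboveB.mono Set.inter_subset_left)

lemma elemSeq_mem (hX : IsBetaSet X) : ∀ n, elemSeq X n ∈ X
  | 0 => Int.csSup_mem hX.nonemptyB hX.bddAboveB
  | n + 1 => (elemSeq_succ_mem hX n).1

lemma elemSeq_succ_lt (hX : IsBetaSet X) (n : ℕ) :
    elemSeq X (n + 1) < elemSeq X n := (elemSeq_succ_mem hX n).2

lemma le_elemSeq_zero (hX : IsBetaSet X) {y : ℤ} (hy : y ∈ X) : y ≤ elemSeq X 0 :=
  le_csSup hX.bddAboveB hy

lemma le_elemSeq_succ (hX : IsBetaSet X) {y : ℤ} {n : ℕ} (hy : y ∈ X)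
    (h : y < elemSeq X n) : y ≤ elemSeq X (n + 1) :=
  le_csSup (hX.bddAboveB.mono Set.inter_subset_left) ⟨hy, h⟩

lemma elemSeq_strictAnti (hX : IsBetaSet X) : StrictAnti (elemSeq X) :=
  strictAnti_nat_of_succ_lt (elemSeq_succ_lt hX)

lemma mem_eq_elemSeq (hX : IsBetaSet X) :
    ∀ (k : ℕ) {y : ℤ}, y ∈ X → elemSeq X k < y → ∃ i, i < k ∧ y = elemSeq X i := by
  intro k
  induction k with
  | zero => exact fun hy h => absurd (le_elemSeq_zero hX hy) (not_le.2 h)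
  | succ k ih =>
    intro y hy h
    rcases lt_trichotomy y (elemSeq X k) with h1 | h1 | h1
    · exact absurd (le_elemSeq_succ hX hy h1) (not_le.2 h)
    · exact ⟨k, k.lt_succ_self, h1⟩
    · obtain ⟨i, hi, he⟩ := ih hy h1
      exact ⟨i, hi.trans k.lt_succ_self, he⟩

lemma charge_le_of_botB (hX : IsBetaSet X) {k : ℕ} (h : botB X - 1 ≤ elemSeq X k) :
    chargeB X ≤ elemSeq X k + k := by
  set B := botB X with hB
  set e := elemSeq X k with he
  have hsub : X ∩ Set.Ici B ⊆ (elemSeq X '' Set.Iio k) ∪ Set.Icc B e := by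
    rintro y ⟨hyX, hyB⟩
    by_cases hy : y ≤ e
    · exact Or.inr ⟨hyB, hy⟩
    · obtain ⟨i, hi, rfl⟩ := mem_eq_elemSeq hX k hyX (not_le.1 hy)
      exact Or.inl ⟨i, hi, rfl⟩
  have hfin : ((elemSeq X '' Set.Iio k) ∪ Set.Icc B e).Finite :=
    ((Set.finite_Iio k).image _).union (Set.finite_Icc _ _)
  have h1 : (X ∩ Set.Ici B).ncard ≤ k + (e + 1 - B).toNat := by
    calc (X ∩ Set.Ici B).ncard
        ≤ ((elemSeq X '' Set.Iio k) ∪ Set.Icc B e).ncard := Set.ncard_le_ncard hsub hfin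
      _ ≤ (elemSeq X '' Set.Iio k).ncard + (Set.Icc B e).ncard := Set.ncard_union_le _ _
      _ ≤ k + (e + 1 - B).toNat := by
          have h2 : (elemSeq X '' Set.Iio k).ncard ≤ k := by
            have := Set.ncard_image_le (s := Set.Iio k) (f := elemSeq X) (Set.finite_Iio k)
            rwa [show (Set.Iio k).ncard = k by
              rw [← Finset.coe_Iio, Set.ncard_coe_finset, Nat.card_Iio]] at this
          have h3 : (Set.Icc B e).ncard = (e + 1 - B).toNat := by
            rw [← Finset.coe_Icc, Set.ncard_coe_finset, Int.card_Icc]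
          omega
  have hch : chargeB X = ((X ∩ Set.Ici B).ncard : ℤ) + B - 1 := rfl
  omega

lemma charge_le_elemSeq (hX : IsBetaSet X) : ∀ k : ℕ, chargeB X ≤ elemSeq X k + k := by
  intro k
  induction k with
  | zero =>
    apply charge_le_of_botB hX
    have hm : botB X - 1 ∈ X := hX.lt_botB_mem (by omega)
    have := le_elemSeq_zero hX hm
    omega
  | succ k ih =>
    by_cases h : elemSeq X k - 1 ∈ X
    · have := le_elemSeq_succ hX (n := k) h (by omega)
      push_cast
      push_cast at ih
      omega
    · have hB : botB X ≤ elemSeq X k - 1 := hX.botB_le h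
      apply charge_le_of_botB hX
      have hm : botB X - 1 ∈ X := hX.lt_botB_mem (by omega)
      exact le_elemSeq_succ hX hm (by omega)

lemma partB_cast (hX : IsBetaSet X) (j : ℕ) :
    (partB X j : ℤ) = elemSeq X j - chargeB X + j := by
  have := charge_le_elemSeq hX j
  unfold partB
  omega

lemma addable_spec (hX : IsBetaSet X) {a b : ℕ} (h : IsAddableBox (partB X) a b) :
    chargeB X + b - a = elemSeq X (a - 1) ∧ (chargeB X + b - a) ∈ X ∧
      (chargeB X + b - a) + 1 ∉ X := by
  obtain ⟨ha, hb, hcond⟩ := h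
  obtain ⟨k, rfl⟩ : ∃ k, a = k + 1 := ⟨a - 1, by omega⟩
  simp only [Nat.add_sub_cancel] at hb ⊢
  have hc := partB_cast hX k
  have hbz : (b : ℤ) = (partB X k : ℤ) + 1 := by exact_mod_cast congrArg (Nat.cast : ℕ → ℤ) hb
  have hx : chargeB X + b - (k + 1 : ℕ) = elemSeq X k := by push_cast; omega
  refine ⟨hx, hx ▸ elemSeq_mem hX k, ?_⟩
  rw [hx]
  rcases hcond with h1 | h1
  · have hk0 : k = 0 := by omega
    subst hk0
    intro hmem
    have := le_elemSeq_zero hX hmem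
    omega
  · rcases k with _ | l
    · have h1' : b ≤ partB X 0 := h1
      omega
    · have hl : l + 1 + 1 - 2 = l := by omega
      rw [hl] at h1
      have hcl := partB_cast hX l
      have hcl1 := partB_cast hX (l + 1)
      have hb1 : (b : ℤ) ≤ (partB X l : ℤ) := by exact_mod_cast h1
      have hgap : elemSeq X (l + 1) + 2 ≤ elemSeq X l := by push_cast at *; omega
      intro hmem
      have := le_elemSeq_succ hX hmem (by omega : elemSeq X (l + 1) + 1 < elemSeq X l)
      omega

lemma removable_spec (hX : IsBetaSet X) {a b : ℕ} (h : IsRemovableBox (partB X) a b) :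
    (chargeB X + b - a) + 1 = elemSeq X (a - 1) ∧ (chargeB X + b - a) ∉ X ∧
      (chargeB X + b - a) + 1 ∈ X := by
  obtain ⟨ha, hb, hb1, hlt⟩ := h
  obtain ⟨k, rfl⟩ : ∃ k, a = k + 1 := ⟨a - 1, by omega⟩
  simp only [Nat.add_sub_cancel] at hb ⊢
  have hc := partB_cast hX k
  have hc1 := partB_cast hX (k + 1)
  have hbz : (b : ℤ) = (partB X k : ℤ) := by exact_mod_cast congrArg (Nat.cast : ℕ → ℤ) hb
  have hltz : (partB X (k + 1) : ℤ) < (b : ℤ) := by exact_mod_cast hlt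
  have hx : (chargeB X + b - (k + 1 : ℕ)) + 1 = elemSeq X k := by push_cast; omega
  refine ⟨hx, ?_, hx ▸ elemSeq_mem hX k⟩
  have hgap : elemSeq X (k + 1) ≤ elemSeq X k - 2 := by push_cast at *; omega
  intro hmem
  have := le_elemSeq_succ hX hmem (by omega : chargeB X + b - (k + 1 : ℕ) < elemSeq X k)
  omega

lemma main_comp (d : ℤ) (hd : 2 ≤ d) (hdE : Even d) (X : Set ℤ) (hX : IsBetaSet X)
    (a₀ b₀ : ℤ) (hlen : b₀ - a₀ = d / 2 - 1) (hbot : a₀ ≤ botB X) (htop : topB X ≤ b₀)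
    {a b a' b' : ℕ}
    (h1 : IsAddableBox (partB X) a b ∨ IsRemovableBox (partB X) a b)
    (h2 : IsAddableBox (partB X) a' b' ∨ IsRemovableBox (partB X) a' b')
    (hdvd : d ∣ ((b : ℤ) - a) - ((b' : ℤ) - a')) : a = a' ∧ b = b' := by
  obtain ⟨r, hr⟩ := hdE
  have htopX : ∀ y : ℤ, y ∈ X → y ≤ b₀ := fun y hy =>
    le_trans (le_csSup hX.bddAboveB hy) htop
  have hbotX : ∀ y : ℤ, y ∉ X → a₀ ≤ y := fun y hy => le_trans hbot (hX.botB_le hy)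
  have hbnd : ∀ (a₁ b₁ : ℕ),
      (IsAddableBox (partB X) a₁ b₁ ∨ IsRemovableBox (partB X) a₁ b₁) →
      a₀ - 1 ≤ chargeB X + b₁ - a₁ ∧ chargeB X + b₁ - a₁ ≤ b₀ := by
    rintro a₁ b₁ (h | h)
    · obtain ⟨_, hmem, hnmem⟩ := addable_spec hX h
      exact ⟨by have := hbotX _ hnmem; omega, htopX _ hmem⟩
    · obtain ⟨_, hnmem, hmem⟩ := removable_spec hX h
      exact ⟨by have := hbotX _ hnmem; omega, by have := htopX _ hmem; omega⟩
  obtain ⟨hL1, hU1⟩ := hbnd a b h1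
  obtain ⟨hL2, hU2⟩ := hbnd a' b' h2
  have hxx : chargeB X + b - a = chargeB X + b' - a' := by
    have hdvd' : d ∣ (chargeB X + b - a) - (chargeB X + b' - a') := by
      have he : (chargeB X + (b : ℤ) - a) - (chargeB X + (b' : ℤ) - a')
          = ((b : ℤ) - a) - ((b' : ℤ) - a') := by ring
      rw [he]; exact hdvd
    have habs : |(chargeB X + (b : ℤ) - a) - (chargeB X + (b' : ℤ) - a')| < d := by
      rcases abs_cases ((chargeB X + (b : ℤ) - a) - (chargeB X + (b' : ℤ) - a')) with
        ⟨he, _⟩ | ⟨he, _⟩ <;> rw [he] <;> omega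
    have h0 := Int.eq_zero_of_abs_lt_dvd hdvd' habs
    omega
  have hinj := (elemSeq_strictAnti hX).injective
  rcases h1 with ha1 | ha1 <;> rcases h2 with ha2 | ha2
  · obtain ⟨he1, hm1, _⟩ := addable_spec hX ha1
    obtain ⟨he2, _, _⟩ := addable_spec hX ha2
    have hae : a - 1 = a' - 1 := hinj (he1.symm.trans (hxx.trans he2))
    have haa : a = a' := by have := ha1.1; have := ha2.1; omega
    have hpp : partB X (a - 1) = partB X (a' - 1) := by rw [hae]
    have hbb1 := ha1.2.1
    have hbb2 := ha2.2.1
    exact ⟨haa, by omega⟩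
  · obtain ⟨_, hm1, _⟩ := addable_spec hX ha1
    obtain ⟨_, hn2, _⟩ := removable_spec hX ha2
    exact absurd (hxx ▸ hm1) hn2
  · obtain ⟨_, hn1, _⟩ := removable_spec hX ha1
    obtain ⟨_, hm2, _⟩ := addable_spec hX ha2
    exact absurd (hxx ▸ hm2) hn1
  · obtain ⟨he1, _, _⟩ := removable_spec hX ha1
    obtain ⟨he2, _, _⟩ := removable_spec hX ha2
    have hxx1 : (chargeB X + (b : ℤ) - a) + 1 = (chargeB X + (b' : ℤ) - a') + 1 := by
      rw [hxx]
    have hae : a - 1 = a' - 1 := hinj (he1.symm.trans (hxx1.trans he2))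
    have haa : a = a' := by have := ha1.1; have := ha2.1; omega
    have hpp : partB X (a - 1) = partB X (a' - 1) := by rw [hae]
    have hbb1 := ha1.2.1
    have hbb2 := ha2.2.1
    exact ⟨haa, by omega⟩

end StmtEightAux

/-- For a `d`-small symbol with bipartition `λ¹.λ²` and charge
`(σ₁,σ₂)`, each component `λ^j` has, for each residue `i` modulo `d`, at most one
addable-or-removable box of charged content `≡ i (mod d)` (charged contents w.r.t.
`t = (σ₁, σ₂ + d/2)`); consequently, the bipartition has at most two such boxes in
total, at most one in each component. -/
theorem stmt8 (d : ℤ) (hd : 2 ≤ d) (hdE : Even d)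
    (X₁ X₂ : Set ℤ) (hX₁ : IsBetaSet X₁) (hX₂ : IsBetaSet X₂)
    (hsm : IsDSmall d X₁ X₂) :
    ∀ j : ℕ, (j = 1 ∨ j = 2) → ∀ a b a' b' : ℕ,
      (IsAddableBox (compPart (partB X₁) (partB X₂) j) a b ∨
        IsRemovableBox (compPart (partB X₁) (partB X₂) j) a b) →
      (IsAddableBox (compPart (partB X₁) (partB X₂) j) a' b' ∨
        IsRemovableBox (compPart (partB X₁) (partB X₂) j) a' b') →
      d ∣ chCont (compT (chargeB X₁) (chargeB X₂ + d / 2) j) a b -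
          chCont (compT (chargeB X₁) (chargeB X₂ + d / 2) j) a' b' →
      a = a' ∧ b = b' := by
  obtain ⟨a₁, b₁, a₂, b₂, hsw⟩ := hsm
  intro j hj a b a' b' h1 h2 hdvd
  rcases hj with rfl | rfl
  · simp only [compPart, compT, if_pos rfl] at h1 h2 hdvd
    refine main_comp d hd hdE X₁ hX₁ a₁ b₁ hsw.len₁ hsw.bot₁ hsw.top₁ h1 h2 ?_
    have he : ((b : ℤ) - a) - ((b' : ℤ) - a')
        = chCont (chargeB X₁) a b - chCont (chargeB X₁) a' b' := by
      simp only [chCont]; ring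
    rw [he]; exact hdvd
  · have h21 : (2 : ℕ) ≠ 1 := by omega
    simp only [compPart, compT, if_neg h21] at h1 h2 hdvd
    refine main_comp d hd hdE X₂ hX₂ a₂ b₂ hsw.len₂ hsw.bot₂ hsw.top₂ h1 h2 ?_
    have he : ((b : ℤ) - a) - ((b' : ℤ) - a')
        = chCont (chargeB X₂ + d / 2) a b - chCont (chargeB X₂ + d / 2) a' b' := by
      simp only [chCont]; ring
    rw [he]; exact hdvd
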